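/- Let f : ℝ → ℝ be continuous and strictly concave on an interval I, and for u < v in I let Θ(u,v) denote the unique maximizer of f(x) - L_{u,v}(x) over [u,v]. Then Θ is monotone in each endpoint: if a < c₁ < c₂ in I then Θ(a,c₁) ≤ Θ(a,c₂), and if a₁ < a₂ < c in I then Θ(a₁,c) ≤ Θ(a₂,c). -/
import Mathlib


/-- The secant line of `f` through `(u, f u)` and `(v, f v)`. -/
noncomputable def secant (f : ℝ → ℝ) (u v : ℝ) (x : ℝ) : ℝ :=
  f u + ((f v - f u) / (v - u)) * (x - u)

/-- The maximum absolute error of the secant approximation of `f` on `[u, v]`: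
`E(u,v) = sup_{x ∈ [u,v]} (f x - L_{u,v} x)`. -/
noncomputable def maxErr (f : ℝ → ℝ) (u v : ℝ) : ℝ :=
  sSup ((fun x => f x - secant f u v x) '' Set.Icc u v)

/-- The (unique) maximizer `Θ u v` of `f - L_{u,v}` on `[u,v]` is
monotone in each endpoint. -/
theorem theta_monotone (f : ℝ → ℝ) (I : Set ℝ) (hI : I.OrdConnected)
    (hf : ContinuousOn f I)
    (hconc : StrictConcaveOn ℝ I f)
    (Θ : ℝ → ℝ → ℝ)
    (hΘ : ∀ u ∈ I, ∀ v ∈ I, u < v →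
      Θ u v ∈ Set.Icc u v ∧
      IsMaxOn (fun x => f x - secant f u v x) (Set.Icc u v) (Θ u v)) :
    (∀ a ∈ I, ∀ c₁ ∈ I, ∀ c₂ ∈ I, a < c₁ → c₁ < c₂ → Θ a c₁ ≤ Θ a c₂) ∧
    (∀ a₁ ∈ I, ∀ a₂ ∈ I, ∀ c ∈ I, a₁ < a₂ → a₂ < c → Θ a₁ c ≤ Θ a₂ c) := by
  constructor
  · intro a ha c₁ hc₁ c₂ hc₂ hac₁ hc₁₂
    obtain ⟨hm₁, hmax₁⟩ := hΘ a ha c₁ hc₁ hac₁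
    obtain ⟨hm₂, hmax₂⟩ := hΘ a ha c₂ hc₂ (hac₁.trans hc₁₂)
    by_contra hcon
    push_neg at hcon
    -- θ₂ < θ₁
    set θ₁ := Θ a c₁ with hθ₁
    set θ₂ := Θ a c₂ with hθ₂
    have hθ₂mem : θ₂ ∈ Set.Icc a c₁ := ⟨hm₂.1, le_of_lt (hcon.trans_le hm₁.2)⟩
    have hθ₁mem : θ₁ ∈ Set.Icc a c₂ := ⟨hm₁.1, hm₁.2.trans hc₁₂.le⟩
    have h1 : f θ₂ - secant f a c₁ θ₂ ≤ f θ₁ - secant f a c₁ θ₁ := hmax₁ hθ₂mem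
    have h2 : f θ₁ - secant f a c₂ θ₁ ≤ f θ₂ - secant f a c₂ θ₂ := hmax₂ hθ₁mem
    have hs : (f c₂ - f a) / (c₂ - a) < (f c₁ - f a) / (c₁ - a) :=
      hconc.secant_strict_mono ha hc₁ hc₂ (ne_of_gt hac₁)
        (ne_of_gt (hac₁.trans hc₁₂)) hc₁₂
    simp only [secant] at h1 h2
    nlinarith [mul_pos (sub_pos.mpr hs) (sub_pos.mpr hcon)]
  · intro a₁ ha₁ a₂ ha₂ c hc h12 h2c
    obtain ⟨hm₁, hmax₁⟩ := hΘ a₁ ha₁ c hc (h12.trans h2c)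
    obtain ⟨hm₂, hmax₂⟩ := hΘ a₂ ha₂ c hc h2c
    by_contra hcon
    push_neg at hcon
    set θ₁ := Θ a₁ c with hθ₁
    set θ₂ := Θ a₂ c with hθ₂
    have hθ₂mem : θ₂ ∈ Set.Icc a₁ c := ⟨h12.le.trans hm₂.1, hm₂.2⟩
    have hθ₁mem : θ₁ ∈ Set.Icc a₂ c := ⟨le_of_lt (hm₂.1.trans_lt hcon), hm₁.2⟩
    have h1 : f θ₂ - secant f a₁ c θ₂ ≤ f θ₁ - secant f a₁ c θ₁ := hmax₁ hθ₂mem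
    have h2 : f θ₁ - secant f a₂ c θ₁ ≤ f θ₂ - secant f a₂ c θ₂ := hmax₂ hθ₁mem
    -- slope(a₂,c) < slope(a₁,c)
    have hs' : (f a₂ - f c) / (a₂ - c) < (f a₁ - f c) / (a₁ - c) :=
      hconc.secant_strict_mono hc ha₁ ha₂ (ne_of_lt (h12.trans h2c)) (ne_of_lt h2c) h12
    have hs : (f c - f a₂) / (c - a₂) < (f c - f a₁) / (c - a₁) := by
      rw [show f c - f a₂ = -(f a₂ - f c) by ring, show c - a₂ = -(a₂ - c) by ring,
        neg_div_neg_eq, show f c - f a₁ = -(f a₁ - f c) by ring,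
        show c - a₁ = -(a₁ - c) by ring, neg_div_neg_eq]
      exact hs'
    simp only [secant] at h1 h2
    nlinarith [mul_pos (sub_pos.mpr hs) (sub_pos.mpr hcon)]
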